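/- Let A, B ∈ ℝ^{n×n} with B invertible and AB = BA, let P, T ∈ ℝ^{n×n} be symmetric positive definite, and let β > 0 be a scalar such that the 2n×2n symmetric block matrix [[AᵀP + PA + T − (4/β)AᵀB⁻ᵀB⁻¹A, PB − (2/β)AᵀB⁻ᵀ], [BᵀP − (2/β)B⁻¹A, −(1/β)I]] is negative semidefinite. Then (A − 2BAB⁻¹)ᵀP + P(A − 2BAB⁻¹) ≤ −βPBBᵀP, and in particular (A − 2BAB⁻¹)ᵀP + P(A − 2BAB⁻¹) is negative definite. -/

import Mathlib

open Matrix

/-- For `A`, `B` with `B` invertible and `AB = BA`, if `P`, `T`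
are symmetric positive definite and `β > 0` are such that the block matrix
`[[AᵀP + PA + T − (4/β)AᵀB⁻ᵀB⁻¹A, PB − (2/β)AᵀB⁻ᵀ], [BᵀP − (2/β)B⁻¹A, −(1/β)I]]`
is negative semidefinite (strict (Q,S,R)-dissipativity), then
`(A − 2BAB⁻¹)ᵀP + P(A − 2BAB⁻¹) ≤ −βPBBᵀP` (i.e. the difference
`−βPBBᵀP − ((A − 2BAB⁻¹)ᵀP + P(A − 2BAB⁻¹))` is positive semidefinite), and in
particular `(A − 2BAB⁻¹)ᵀP + P(A − 2BAB⁻¹)` is negative definite. -/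
theorem asympStable_of_strictlyDissipative {n : ℕ}
    (A B P T : Matrix (Fin n) (Fin n) ℝ)
    (hB : IsUnit B.det)
    (hAB : A * B = B * A)
    (hP : P.PosDef) (hT : T.PosDef)
    (β : ℝ) (hβ : 0 < β)
    (hdissip : ∀ z : Fin n ⊕ Fin n → ℝ,
      z ⬝ᵥ ((Matrix.fromBlocks
          (Aᵀ * P + P * A + T - (4 / β) • (Aᵀ * B⁻¹ᵀ * B⁻¹ * A))
          (P * B - (2 / β) • (Aᵀ * B⁻¹ᵀ))
          (Bᵀ * P - (2 / β) • (B⁻¹ * A))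
          (-((1 / β) • (1 : Matrix (Fin n) (Fin n) ℝ)))) *ᵥ z) ≤ 0) :
    (∀ z : Fin n → ℝ,
      0 ≤ z ⬝ᵥ ((-(β • (P * B * Bᵀ * P))
        - ((A - 2 • (B * A * B⁻¹))ᵀ * P + P * (A - 2 • (B * A * B⁻¹)))) *ᵥ z))
    ∧ (∀ z : Fin n → ℝ, z ≠ 0 →
      z ⬝ᵥ (((A - 2 • (B * A * B⁻¹))ᵀ * P + P * (A - 2 • (B * A * B⁻¹))) *ᵥ z) < 0) := by
  have hβ' : β ≠ 0 := ne_of_gt hβ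
  have hBB : B * B⁻¹ = 1 := Matrix.mul_nonsing_inv B hB
  have hBB' : B⁻¹ * B = 1 := Matrix.nonsing_inv_mul B hB
  have hBBt : B⁻¹ᵀ * Bᵀ = 1 := by rw [← Matrix.transpose_mul, hBB, Matrix.transpose_one]
  have hPs : Pᵀ = P := hP.isHermitian.eq
  -- closed loop matrix is -A
  have hAcl : A - 2 • (B * A * B⁻¹) = -A := by
    have : B * A * B⁻¹ = A := by rw [← hAB, mul_assoc, hBB, mul_one]
    rw [this, two_smul]; abel
  set M : Matrix (Fin n) (Fin n) ℝ := P * B - (2 / β) • (Aᵀ * B⁻¹ᵀ) with hMdef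
  have hMT : Mᵀ = Bᵀ * P - (2 / β) • (B⁻¹ * A) := by
    simp [hMdef, Matrix.transpose_sub, Matrix.transpose_smul, Matrix.transpose_mul,
      Matrix.transpose_transpose, hPs]
  set N : Matrix (Fin n) (Fin n) ℝ :=
    Aᵀ * P + P * A + T - (4 / β) • (Aᵀ * B⁻¹ᵀ * B⁻¹ * A) with hNdef
  -- key matrix identity
  have hexp : N + β • (M * Mᵀ) = T - (Aᵀ * P + P * A) + β • (P * B * Bᵀ * P) := by
    have e1 : P * B * (B⁻¹ * A) = P * A := by
      rw [mul_assoc P, ← mul_assoc B, hBB, one_mul]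
    have e2 : Aᵀ * B⁻¹ᵀ * (Bᵀ * P) = Aᵀ * P := by
      rw [mul_assoc Aᵀ, ← mul_assoc B⁻¹ᵀ, hBBt, one_mul]
    have e3 : Aᵀ * B⁻¹ᵀ * (B⁻¹ * A) = Aᵀ * B⁻¹ᵀ * B⁻¹ * A := (mul_assoc _ _ _).symm
    have e4 : P * B * (Bᵀ * P) = P * B * Bᵀ * P := (mul_assoc _ _ _).symm
    rw [hNdef, hMT, hMdef]
    simp only [Matrix.sub_mul, Matrix.mul_sub, smul_sub, Matrix.smul_mul, Matrix.mul_smul,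
      smul_smul, e1, e2, e3, e4]
    match_scalars <;> field_simp <;> ring
  -- key quadratic inequality
  have hdp : ∀ w : Fin n → ℝ, 0 ≤ w ⬝ᵥ w := fun w =>
    Finset.sum_nonneg fun i _ => mul_self_nonneg (w i)
  have hkey : ∀ x : Fin n → ℝ,
      x ⬝ᵥ (T *ᵥ x)
        ≤ x ⬝ᵥ ((Aᵀ * P) *ᵥ x) + x ⬝ᵥ ((P * A) *ᵥ x)
            - β * (x ⬝ᵥ ((P * B * Bᵀ * P) *ᵥ x)) := by
    intro x
    have h := hdissip (Sum.elim x (β • (Mᵀ *ᵥ x)))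
    rw [← hMT, Matrix.fromBlocks_mulVec, sumElim_dotProduct_sumElim] at h
    simp only [Sum.elim_comp_inl, Sum.elim_comp_inr, Matrix.mulVec_smul, dotProduct_add,
      dotProduct_smul, smul_dotProduct, Matrix.neg_mulVec, Matrix.one_mulVec, dotProduct_neg,
      Matrix.smul_mulVec, smul_eq_mul] at h
    have hs : x ⬝ᵥ (M *ᵥ (Mᵀ *ᵥ x)) = (Mᵀ *ᵥ x) ⬝ᵥ (Mᵀ *ᵥ x) := by
      rw [Matrix.dotProduct_mulVec x, ← Matrix.mulVec_transpose M x]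
    have hs2 : (Mᵀ *ᵥ x) ⬝ᵥ (Mᵀ *ᵥ x) = x ⬝ᵥ ((M * Mᵀ) *ᵥ x) := by
      rw [← Matrix.mulVec_mulVec, Matrix.dotProduct_mulVec x, ← Matrix.mulVec_transpose M x]
    rw [hs] at h
    have hc : β * -(1 / β * (β * ((Mᵀ *ᵥ x) ⬝ᵥ (Mᵀ *ᵥ x))))
        = -(β * ((Mᵀ *ᵥ x) ⬝ᵥ (Mᵀ *ᵥ x))) := by field_simp
    have h2 : x ⬝ᵥ (N *ᵥ x) + β * ((Mᵀ *ᵥ x) ⬝ᵥ (Mᵀ *ᵥ x)) ≤ 0 := by linarith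
    have h3 : x ⬝ᵥ ((N + β • (M * Mᵀ)) *ᵥ x) ≤ 0 := by
      rw [Matrix.add_mulVec, dotProduct_add, Matrix.smul_mulVec, dotProduct_smul,
        smul_eq_mul, ← hs2]
      exact h2
    rw [hexp, Matrix.add_mulVec, Matrix.sub_mulVec, Matrix.add_mulVec, dotProduct_add,
      dotProduct_sub, dotProduct_add, Matrix.smul_mulVec, dotProduct_smul,
      smul_eq_mul] at h3
    linarith
  -- nonnegativity of the quadratic form of P B Bᵀ P
  have hVnn : ∀ x : Fin n → ℝ, 0 ≤ x ⬝ᵥ ((P * B * Bᵀ * P) *ᵥ x) := by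
    intro x
    have hW : P * B * Bᵀ * P = (Bᵀ * P)ᵀ * (Bᵀ * P) := by
      rw [Matrix.transpose_mul, Matrix.transpose_transpose, hPs, mul_assoc, ← mul_assoc]
    rw [hW, ← Matrix.mulVec_mulVec, Matrix.dotProduct_mulVec x, Matrix.vecMul_transpose]
    exact hdp _
  have hTnn : ∀ x : Fin n → ℝ, 0 ≤ x ⬝ᵥ (T *ᵥ x) := by
    intro x
    simpa using hT.posSemidef.dotProduct_mulVec_nonneg x
  constructor
  · intro x
    rw [hAcl]
    simp only [Matrix.transpose_neg, Matrix.neg_mul, Matrix.mul_neg, Matrix.sub_mulVec,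
      Matrix.add_mulVec, Matrix.neg_mulVec, Matrix.smul_mulVec, dotProduct_sub,
      dotProduct_add, dotProduct_neg, dotProduct_smul, smul_eq_mul]
    linarith [hkey x, hTnn x]
  · intro x hx
    rw [hAcl]
    simp only [Matrix.transpose_neg, Matrix.neg_mul, Matrix.mul_neg, Matrix.add_mulVec,
      Matrix.neg_mulVec, dotProduct_add, dotProduct_neg]
    have hTpos : 0 < x ⬝ᵥ (T *ᵥ x) := by simpa using hT.dotProduct_mulVec_pos hx
    have := hVnn x
    nlinarith [hkey x]
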